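/- Let $G$ be a group nilpotent of class at most 2 whose derived subgroup $G'$ consists of elements of finite odd order, with addition defined by $h_1 + h_2 = h_1 h_2 [h_2,h_1]^{1/2}$. Then $(G,+,\cdot)$ is a left brace: for all $a,b,c \in G$, $a(b+c) + a = ab + ac$. -/

import Mathlib

open scoped commutatorElement

/-- The addition `h₁ + h₂ = h₁h₂[h₂,h₁]^{1/2}`, where `r` is a square-root function
on the derived subgroup. -/
def braceAdd {G : Type*} [Group G] (r : G → G) (a b : G) : G := a * b * r ⁅b, a⁆

/-- If `G` is nilpotent of class at most 2 and every element of `G' = [G,G]` has odd order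
(so that `r` picks the unique square root in `G'`), then with the addition
`h₁ + h₂ = h₁h₂[h₂,h₁]^{1/2}` the structure `(G, +, ·)` is a left brace:
`a(b + c) + a = ab + ac` for all `a b c`. -/
theorem stmt1 {G : Type*} [Group G]
    (hclass : ∀ a b c : G, ⁅⁅a, b⁆, c⁆ = 1)
    (hodd : ∀ g ∈ commutator G, Odd (orderOf g))
    (r : G → G)
    (hr : ∀ g ∈ commutator G, r g ∈ commutator G ∧ r g * r g = g) :
    ∀ a b c : G, braceAdd r (a * braceAdd r b c) a = braceAdd r (a * b) (a * c) := by
  -- commutators are central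
  have hcen : ∀ x y z : G, ⁅x, y⁆ * z = z * ⁅x, y⁆ := fun x y z =>
    commutatorElement_eq_one_iff_mul_comm.mp (hclass x y z)
  have hmem : ∀ x y : G, ⁅x, y⁆ ∈ commutator G := fun x y =>
    Subgroup.commutator_mem_commutator (Subgroup.mem_top x) (Subgroup.mem_top y)
  -- the commutator subgroup is central
  have hle : commutator G ≤ Subgroup.center G := by
    rw [commutator_def, Subgroup.commutator_le]
    intro p _ q _
    exact Subgroup.mem_center_iff.mpr fun z => (hcen p q z).symm
  have hZ : ∀ g ∈ commutator G, ∀ x : G, g * x = x * g := fun g hg x =>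
    ((Subgroup.mem_center_iff.mp (hle hg)) x).symm
  -- squaring is injective on the commutator subgroup
  have hsq : ∀ x ∈ commutator G, ∀ y ∈ commutator G, x * x = y * y → x = y := by
    intro x hx y hy h
    have hxy : x * y⁻¹ ∈ commutator G := mul_mem hx (inv_mem hy)
    have h2 : (x * y⁻¹) ^ 2 = 1 := by
      have hc : y⁻¹ * x = x * y⁻¹ := hZ _ (inv_mem hy) x
      have : x * y⁻¹ * (x * y⁻¹) = x * x * (y⁻¹ * y⁻¹) := by
        rw [mul_assoc x y⁻¹, ← mul_assoc y⁻¹, hc]; group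
      rw [pow_two, this, h]; group
    have hdvd : orderOf (x * y⁻¹) ∣ 2 := orderOf_dvd_of_pow_eq_one h2
    have h1 : x * y⁻¹ = 1 := by
      rcases (Nat.dvd_prime Nat.prime_two).mp hdvd with h' | h'
      · exact orderOf_eq_one_iff.mp h'
      · exact absurd (h' ▸ hodd _ hxy) (by decide)
    have := mul_eq_one_iff_eq_inv.mp h1
    simpa using this
  -- r is multiplicative on the commutator subgroup
  have hrmul : ∀ g ∈ commutator G, ∀ h ∈ commutator G,
      r (g * h) = r g * r h := by
    intro g hg h hh
    refine hsq _ (hr _ (mul_mem hg hh)).1 _ (mul_mem (hr _ hg).1 (hr _ hh).1) ?_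
    have h1 : r h * r g = r g * r h := hZ _ (hr _ hh).1 _
    calc r (g * h) * r (g * h) = g * h := (hr _ (mul_mem hg hh)).2
      _ = r g * r g * (r h * r h) := by rw [(hr _ hg).2, (hr _ hh).2]
      _ = r g * r h * (r g * r h) := by
          have e : r g * r g * (r h * r h) = r g * (r h * r g) * r h := by
            rw [show r g * r g * (r h * r h) = r g * (r g * r h) * r h from by group, ← h1]
          rw [e]; group
  -- key: r⁅x,y⁆ = ⁅x,y⁆ * r⁅y,x⁆
  have hrkey : ∀ x y : G, r ⁅x, y⁆ = ⁅x, y⁆ * r ⁅y, x⁆ := by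
    intro x y
    refine hsq _ (hr _ (hmem x y)).1 _ (mul_mem (hmem x y) (hr _ (hmem y x)).1) ?_
    have h1 : r ⁅y, x⁆ * ⁅x, y⁆ = ⁅x, y⁆ * r ⁅y, x⁆ := hZ _ (hr _ (hmem y x)).1 _
    calc r ⁅x, y⁆ * r ⁅x, y⁆ = ⁅x, y⁆ := (hr _ (hmem x y)).2
      _ = ⁅x, y⁆ * ⁅x, y⁆ * ⁅y, x⁆ := by
          rw [show ⁅y, x⁆ = ⁅x, y⁆⁻¹ from (commutatorElement_inv x y).symm]; group
      _ = ⁅x, y⁆ * ⁅x, y⁆ * (r ⁅y, x⁆ * r ⁅y, x⁆) := by rw [(hr _ (hmem y x)).2]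
      _ = ⁅x, y⁆ * r ⁅y, x⁆ * (⁅x, y⁆ * r ⁅y, x⁆) := by
          have e : ⁅x, y⁆ * ⁅x, y⁆ * (r ⁅y, x⁆ * r ⁅y, x⁆)
              = ⁅x, y⁆ * (r ⁅y, x⁆ * ⁅x, y⁆) * r ⁅y, x⁆ := by
            rw [show ⁅x, y⁆ * ⁅x, y⁆ * (r ⁅y, x⁆ * r ⁅y, x⁆)
                  = ⁅x, y⁆ * (⁅x, y⁆ * r ⁅y, x⁆) * r ⁅y, x⁆ from by group, ← h1]
          rw [e]; group
  -- commutator bilinearity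
  have hmul_right : ∀ x y z : G, ⁅x, y * z⁆ = ⁅x, y⁆ * ⁅x, z⁆ := by
    intro x y z
    have key : z * x⁻¹ * z⁻¹ = x⁻¹ * ⁅x, z⁆ := by rw [commutatorElement_def]; group
    calc ⁅x, y * z⁆ = x * y * (z * x⁻¹ * z⁻¹) * y⁻¹ := by
          rw [commutatorElement_def]; group
      _ = x * y * (x⁻¹ * ⁅x, z⁆) * y⁻¹ := by rw [key]
      _ = x * y * x⁻¹ * (⁅x, z⁆ * y⁻¹) := by group
      _ = x * y * x⁻¹ * (y⁻¹ * ⁅x, z⁆) := by rw [hcen x z]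
      _ = ⁅x, y⁆ * ⁅x, z⁆ := by rw [commutatorElement_def]; group
  have hmul_left : ∀ x y z : G, ⁅x * y, z⁆ = ⁅x, z⁆ * ⁅y, z⁆ := by
    intro x y z
    have key : y * z * y⁻¹ = ⁅y, z⁆ * z := by rw [commutatorElement_def]; group
    calc ⁅x * y, z⁆ = x * (y * z * y⁻¹) * x⁻¹ * z⁻¹ := by
          rw [commutatorElement_def]; group
      _ = x * (⁅y, z⁆ * z) * x⁻¹ * z⁻¹ := by rw [key]
      _ = x * ⁅y, z⁆ * (z * x⁻¹ * z⁻¹) := by group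
      _ = ⁅y, z⁆ * x * (z * x⁻¹ * z⁻¹) := by rw [← hcen y z x]
      _ = ⁅y, z⁆ * ⁅x, z⁆ := by rw [commutatorElement_def]; group
      _ = ⁅x, z⁆ * ⁅y, z⁆ := hcen y z _
  -- commutator with central elements is trivial
  have hcomm_r : ∀ (x : G) (g : G), g ∈ commutator G → ⁅x, r g⁆ = 1 := by
    intro x g hg
    exact commutatorElement_eq_one_iff_mul_comm.mpr (hZ _ (hr _ hg).1 x).symm
  intro a b c
  simp only [braceAdd]
  -- compute the two outer commutators
  have h1 : ⁅a, a * (b * c * r ⁅c, b⁆)⁆ = ⁅a, b⁆ * ⁅a, c⁆ := by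
    rw [hmul_right, commutatorElement_self, one_mul, hmul_right, hmul_right,
      hcomm_r a _ (hmem c b), mul_one]
  have h2 : ⁅a * c, a * b⁆ = ⁅a, b⁆ * (⁅c, a⁆ * ⁅c, b⁆) := by
    rw [hmul_left, hmul_right, hmul_right, commutatorElement_self, one_mul]
  rw [h1, h2, hrmul _ (hmem a b) _ (hmem a c),
    hrmul _ (hmem a b) _ (mul_mem (hmem c a) (hmem c b)),
    hrmul _ (hmem c a) _ (hmem c b), hrkey a c]
  -- abbreviations
  set z1 := r ⁅c, b⁆ with hz1def
  set z2 := r ⁅a, b⁆ with hz2def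
  set z3 := r ⁅c, a⁆ with hz3def
  set w := ⁅a, c⁆ with hwdef
  have hz1 : ∀ x : G, z1 * x = x * z1 := hZ _ (hr _ (hmem c b)).1
  have hz2 : ∀ x : G, z2 * x = x * z2 := hZ _ (hr _ (hmem a b)).1
  have hz3 : ∀ x : G, z3 * x = x * z3 := hZ _ (hr _ (hmem c a)).1
  have hw : ∀ x : G, w * x = x * w := hcen a c
  have hwca : w * (c * a) = a * c := by rw [hwdef, commutatorElement_def]; group
  -- goal: a * (b * c * z1) * a * (z2 * (w * z3)) = a * b * (a * c) * (z2 * (z3 * z1))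
  calc a * (b * c * z1) * a * (z2 * (w * z3))
      = a * b * c * (z1 * a) * (z2 * (w * z3)) := by group
    _ = a * b * c * (a * z1) * (z2 * (w * z3)) := by rw [hz1 a]
    _ = a * b * c * a * (z1 * (z2 * (w * z3))) := by group
    _ = a * b * c * a * ((z2 * (w * z3)) * z1) := by rw [hz1]
    _ = a * b * c * a * (z2 * w * (z3 * z1)) := by group
    _ = a * b * c * a * (w * z2 * (z3 * z1)) := by rw [hz2 w]
    _ = a * b * c * (a * w) * (z2 * (z3 * z1)) := by group
    _ = a * b * c * (w * a) * (z2 * (z3 * z1)) := by rw [hw a]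
    _ = a * b * (c * w) * a * (z2 * (z3 * z1)) := by group
    _ = a * b * (w * c) * a * (z2 * (z3 * z1)) := by rw [hw c]
    _ = a * b * (w * (c * a)) * (z2 * (z3 * z1)) := by group
    _ = a * b * (a * c) * (z2 * (z3 * z1)) := by rw [hwca]
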